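/- Let n ≥ 2, let U ⊆ ℂⁿ be open and connected, let γ_{jk} : U → ℂ (j ≠ k) be functions, and let b₁,…,bₙ : U → ℂ be differentiable nonvanishing functions satisfying ∂ₖbⱼ = −γ_{jk}·bⱼ for all j ≠ k and ∂ⱼbⱼ = bⱼ⁻¹·∑_{l≠j} bₗ²γ_{lj} for every j, where ∂ₖ denotes the directional derivative along the k-th standard basis vector of ℂⁿ. Then ∑_{j=1}^{n} bⱼ² is constant on U. -/

import Mathlib

noncomputable section

open Complex Finset

/-- Directional (partial) derivative of a scalar function on ℂⁿ along the
k-th standard basis vector. -/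
def pdS {n : ℕ} (k : Fin n) (F : (Fin n → ℂ) → ℂ) : (Fin n → ℂ) → ℂ :=
  fun u => fderiv ℂ F u (Pi.single k 1)

/-- the prime integral of the system (hoj)–(ajj): if
`∂ₖbⱼ = −γ_{jk}bⱼ` for `j ≠ k` and `∂ⱼbⱼ = bⱼ⁻¹ ∑_{l≠j} bₗ²γ_{lj}`, then
`∑ⱼ bⱼ²` is constant on the open connected set `U`. -/
theorem stmt16 (n : ℕ) (hn : 2 ≤ n)
    (U : Set (Fin n → ℂ)) (hU : IsOpen U) (hUconn : IsConnected U)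
    (γ : Fin n → Fin n → (Fin n → ℂ) → ℂ)
    (b : Fin n → (Fin n → ℂ) → ℂ)
    (hbdiff : ∀ j, DifferentiableOn ℂ (b j) U)
    (hbne : ∀ j, ∀ u ∈ U, b j u ≠ 0)
    (heq : ∀ j k : Fin n, j ≠ k → ∀ u ∈ U, pdS k (b j) u = - γ j k u * b j u)
    (heq' : ∀ j : Fin n, ∀ u ∈ U,
      pdS j (b j) u = (b j u)⁻¹ * ∑ l ∈ Finset.univ \ {j}, (b l u)^2 * γ l j u) :
    ∃ c : ℂ, ∀ u ∈ U, ∑ j, (b j u)^2 = c := by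
  set F : (Fin n → ℂ) → ℂ := fun u => ∑ j, (b j u)^2 with hF
  -- b j is differentiable at each point of U
  have hbAt : ∀ j, ∀ u ∈ U, DifferentiableAt ℂ (b j) u := fun j u hu =>
    ((hbdiff j) u hu).differentiableAt (hU.mem_nhds hu)
  have hFdiff : ∀ u ∈ U, DifferentiableAt ℂ F u := by
    intro u hu
    exact DifferentiableAt.fun_sum fun j _ => (hbAt j u hu).pow 2
  -- the derivative of F is zero on U
  have hderiv0 : ∀ u ∈ U, fderiv ℂ F u = 0 := by
    intro u hu
    -- first compute the value on each basis vector
    have key : ∀ k : Fin n, fderiv ℂ F u (Pi.single k 1) = 0 := by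
      intro k
      have hsum : fderiv ℂ F u = ∑ j, fderiv ℂ (fun v => (b j v)^2) u := by
        rw [hF]
        exact fderiv_fun_sum fun j _ => (hbAt j u hu).pow 2
      have hsq : ∀ j, fderiv ℂ (fun v => (b j v)^2) u
          = (2 * b j u) • fderiv ℂ (b j) u := by
        intro j
        have : (fun v => (b j v)^2) = fun v => b j v * b j v := by
          funext v; ring
        rw [this, fderiv_fun_mul (hbAt j u hu) (hbAt j u hu)]
        ext v
        simp [two_mul, mul_comm, mul_add, add_mul]
        ring
      have happ : fderiv ℂ F u (Pi.single k 1)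
          = ∑ j, (2 * b j u) * pdS k (b j) u := by
        rw [hsum]
        rw [ContinuousLinearMap.sum_apply]
        refine Finset.sum_congr rfl fun j _ => ?_
        rw [hsq j]
        simp [pdS, smul_eq_mul]
      rw [happ]
      have hsplit : (univ : Finset (Fin n)) = insert k (univ \ {k}) := by
        ext j; by_cases h : j = k <;> simp [h]
      rw [hsplit, Finset.sum_insert (by simp)]
      have hk : pdS k (b k) u = (b k u)⁻¹ * ∑ l ∈ univ \ {k}, (b l u)^2 * γ l k u :=
        heq' k u hu
      have hoff : ∀ j ∈ univ \ {k}, (2 * b j u) * pdS k (b j) u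
          = -(2 * ((b j u)^2 * γ j k u)) := by
        intro j hj
        have hjk : j ≠ k := by simpa using (Finset.mem_sdiff.mp hj).2
        rw [heq j k hjk u hu]
        ring
      rw [Finset.sum_congr rfl hoff, hk]
      have hbk := hbne k u hu
      field_simp
      rw [Finset.mul_sum, ← Finset.sum_add_distrib]
      exact Finset.sum_eq_zero fun x _ => by ring
    -- conclude the full derivative is zero using the standard basis
    have : (fderiv ℂ F u : (Fin n → ℂ) →ₗ[ℂ] ℂ) = (0 : (Fin n → ℂ) →ₗ[ℂ] ℂ) := by
      apply (Pi.basisFun ℂ (Fin n)).ext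
      intro i
      simpa [Pi.basisFun_apply] using key i
    ext v
    have := LinearMap.congr_fun this v
    simpa using this
  -- local constancy: F is constant near each point of U
  have hloc : ∀ u ∈ U, ∀ᶠ v in nhds u, F v = F u := by
    intro u hu
    obtain ⟨ε, hε, hball⟩ := Metric.isOpen_iff.mp hU u hu
    have hconv : Convex ℝ (Metric.ball u ε) := convex_ball u ε
    have hdiff : DifferentiableOn ℂ F (Metric.ball u ε) := fun x hx =>
      (hFdiff x (hball hx)).differentiableWithinAt
    have hzero : ∀ x ∈ Metric.ball u ε, fderivWithin ℂ F (Metric.ball u ε) x = 0 := by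
      intro x hx
      rw [fderivWithin_of_isOpen Metric.isOpen_ball hx]
      exact hderiv0 x (hball hx)
    filter_upwards [Metric.ball_mem_nhds u hε] with v hv
    exact hconv.is_const_of_fderivWithin_eq_zero hdiff hzero hv (Metric.mem_ball_self hε)
  -- connectedness: F is constant on U
  obtain ⟨u₀, hu₀⟩ := hUconn.nonempty
  refine ⟨F u₀, ?_⟩
  intro u hu
  set S : Set (Fin n → ℂ) := {v | v ∈ U ∧ F v = F u₀} with hS
  set T : Set (Fin n → ℂ) := {v | v ∈ U ∧ F v ≠ F u₀} with hT
  have hSopen : IsOpen S := by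
    rw [isOpen_iff_mem_nhds]
    rintro v ⟨hvU, hvF⟩
    filter_upwards [hloc v hvU, hU.mem_nhds hvU] with w hw hwU
    exact ⟨hwU, hw.trans hvF⟩
  have hTopen : IsOpen T := by
    rw [isOpen_iff_mem_nhds]
    rintro v ⟨hvU, hvF⟩
    filter_upwards [hloc v hvU, hU.mem_nhds hvU] with w hw hwU
    exact ⟨hwU, by rw [hw]; exact hvF⟩
  by_contra hne
  have hsub : U ⊆ S ∪ T := fun v hv => by
    by_cases h : F v = F u₀
    · exact Or.inl ⟨hv, h⟩
    · exact Or.inr ⟨hv, h⟩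
  have hSne : (U ∩ S).Nonempty := ⟨u₀, hu₀, hu₀, rfl⟩
  have hTne : (U ∩ T).Nonempty := ⟨u, hu, hu, hne⟩
  obtain ⟨w, _, ⟨_, hw1⟩, ⟨_, hw2⟩⟩ :=
    hUconn.isPreconnected S T hSopen hTopen hsub hSne hTne
  exact hw2 hw1
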